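/- The Pauli group P_{1,2} is just nonabelian but not minimal nonabelian: P_{1,2} is nonabelian, for every nontrivial normal subgroup N of P_{1,2} the quotient P_{1,2}/N is abelian, and P_{1,2} possesses a proper subgroup that is nonabelian. -/

import Mathlib

open Matrix

/-- The shift matrix `X_k` on `n` qubits: `(X_k)_{u,v} = 1` if `u = v + e_k`, else `0`. -/
def shiftX2 (n : ℕ) (k : Fin n) :
    Matrix (Fin n → ZMod 2) (Fin n → ZMod 2) ℂ :=
  Matrix.of fun u v => if u = v + Pi.single k 1 then 1 else 0

/-- The clock matrix `Z_k` on `n` qubits: diagonal with `(Z_k)_{v,v} = (−1)^{(v k).val}`. -/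
def clockZ2 (n : ℕ) (k : Fin n) :
    Matrix (Fin n → ZMod 2) (Fin n → ZMod 2) ℂ :=
  Matrix.diagonal fun v => (-1 : ℂ) ^ (v k).val

/-- The Pauli group `P_{n,2}` on `n` qubits: the subgroup of the units of the matrix ring
generated by the scalar matrix `i·I` and the shift and clock matrices `X_k`, `Z_k`. -/
noncomputable def PauliGroup2 (n : ℕ) :
    Subgroup (Matrix (Fin n → ZMod 2) (Fin n → ZMod 2) ℂ)ˣ :=
  Subgroup.closure
    {u : (Matrix (Fin n → ZMod 2) (Fin n → ZMod 2) ℂ)ˣ |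
      (u : Matrix (Fin n → ZMod 2) (Fin n → ZMod 2) ℂ) = Complex.I • 1 ∨
      ∃ k : Fin n,
        (u : Matrix (Fin n → ZMod 2) (Fin n → ZMod 2) ℂ) = shiftX2 n k ∨
        (u : Matrix (Fin n → ZMod 2) (Fin n → ZMod 2) ℂ) = clockZ2 n k}

abbrev V1 := Fin 1 → ZMod 2
notation "XM" => shiftX2 1 0
notation "ZM" => clockZ2 1 0

lemma ee_zero : ((Pi.single 0 1 : V1) + Pi.single 0 1) = 0 := by decide

lemma XX : XM * XM = 1 := by
  ext u v
  simp only [shiftX2, Matrix.mul_apply, Matrix.of_apply, mul_ite, mul_one, mul_zero]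
  rw [Finset.sum_ite_eq' Finset.univ (v + Pi.single 0 1)]
  simp [add_assoc, ee_zero, Matrix.one_apply]

lemma negpow (t : ZMod 2) : (-1:ℂ) ^ ((t+1).val) = -(-1:ℂ)^(t.val) := by
  fin_cases t
  · show (-1:ℂ)^(1:ℕ) = -(-1:ℂ)^(0:ℕ)
    norm_num
  · show (-1:ℂ)^(0:ℕ) = -(-1:ℂ)^(1:ℕ)
    norm_num

lemma sqpow (t : ZMod 2) : (-1:ℂ)^t.val * (-1)^t.val = 1 := by
  rw [← pow_add]
  exact (neg_one_pow_eq_one_iff_even (by norm_num)).2 (Even.add_self _)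

lemma ZZ : ZM * ZM = 1 := by
  rw [clockZ2, Matrix.diagonal_mul_diagonal]
  ext u v
  simp [Matrix.diagonal_apply, Matrix.one_apply, sqpow]

lemma ZX_eq_neg_XZ : ZM * XM = -(XM * ZM) := by
  ext u v
  rw [clockZ2, Matrix.neg_apply, Matrix.diagonal_mul, Matrix.mul_diagonal]
  simp only [shiftX2, Matrix.of_apply]
  by_cases h : u = v + Pi.single 0 1
  · subst h
    simp only [if_pos rfl, mul_one, one_mul]
    have h2 : ((v + Pi.single 0 1 : V1) 0) = v 0 + 1 := by simp
    rw [h2, negpow]; ring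
  · simp [h]

lemma XZ_entry : (XM * ZM) (fun _ => 0) (Pi.single 0 1) = -1 := by
  rw [clockZ2, Matrix.mul_diagonal]
  have h1 : (fun _ => (0:ZMod 2)) = ((Pi.single 0 1 : V1) + Pi.single 0 1) := by decide
  have h2 : ((Pi.single 0 1 : V1) 0).val = 1 := by decide
  simp [shiftX2, ← h1, h2, ZMod.val_one]

noncomputable def Xu : (Matrix V1 V1 ℂ)ˣ := ⟨XM, XM, XX, XX⟩
noncomputable def Zu : (Matrix V1 V1 ℂ)ˣ := ⟨ZM, ZM, ZZ, ZZ⟩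

lemma smul_one_mul_smul_one (a b : ℂ) :
    (a • (1:Matrix V1 V1 ℂ)) * (b • 1) = (a*b) • 1 := by
  rw [smul_mul_assoc, mul_smul_comm, one_mul, smul_smul]

noncomputable def Iu : (Matrix V1 V1 ℂ)ˣ :=
  ⟨Complex.I • 1, (-Complex.I) • 1,
    by rw [smul_one_mul_smul_one]; norm_num [Complex.I_mul_I],
    by rw [smul_one_mul_smul_one]; norm_num [Complex.I_mul_I]⟩

lemma Iu_central (u : (Matrix V1 V1 ℂ)ˣ) : Iu * u = u * Iu := by
  refine Units.ext ?_
  show (Complex.I • 1) * u.val = u.val * (Complex.I • 1)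
  rw [smul_mul_assoc, mul_smul_comm, one_mul, mul_one]

lemma Iu_sq : (Iu * Iu).val = (-1 : Matrix V1 V1 ℂ) := by
  show (Complex.I • (1:Matrix V1 V1 ℂ)) * (Complex.I • 1) = -1
  rw [smul_one_mul_smul_one, Complex.I_mul_I]; simp

lemma Iu4 : Iu ^ 4 = 1 := by
  refine Units.ext ?_
  have h : Iu^4 = (Iu*Iu)*(Iu*Iu) := by rw [pow_succ, pow_succ, pow_succ, pow_one, mul_assoc]
  rw [h, Units.val_mul, Iu_sq]
  simp

lemma Xu2 : Xu ^ 2 = 1 := by refine Units.ext ?_; rw [pow_two]; exact XX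
lemma Zu2 : Zu ^ 2 = 1 := by refine Units.ext ?_; rw [pow_two]; exact ZZ

lemma swapZX : Zu * Xu = Iu^2 * (Xu * Zu) := by
  refine Units.ext ?_
  rw [pow_two]
  show ZM * XM = (Iu*Iu).val * (XM * ZM)
  rw [Iu_sq, ZX_eq_neg_XZ, neg_one_mul]

lemma Ipow_central (k : ℕ) (u : (Matrix V1 V1 ℂ)ˣ) : Iu^k * u = u * Iu^k :=
  ((Commute.pow_left (Iu_central u) k)).symm ▸ rfl

-- canonical-form rewriting lemmas
lemma cX2 (k b : ℕ) : Xu^b * Iu^k = Iu^k * Xu^b := (Ipow_central k (Xu^b)).symm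
lemma cZ2 (k c : ℕ) : Zu^c * Iu^k = Iu^k * Zu^c := (Ipow_central k (Zu^c)).symm
lemma cX1 (k b : ℕ) (R : (Matrix V1 V1 ℂ)ˣ) :
    Xu^b * (Iu^k * R) = Iu^k * (Xu^b * R) := by
  rw [← mul_assoc, cX2, mul_assoc]
lemma cZ1 (k c : ℕ) (R : (Matrix V1 V1 ℂ)ˣ) :
    Zu^c * (Iu^k * R) = Iu^k * (Zu^c * R) := by
  rw [← mul_assoc, cZ2, mul_assoc]
lemma mII1 (j k : ℕ) (R : (Matrix V1 V1 ℂ)ˣ) : Iu^j * (Iu^k * R) = Iu^(j+k) * R := by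
  rw [← mul_assoc, ← pow_add]
lemma mII2 (j k : ℕ) : Iu^j * Iu^k = Iu^(j+k) := (pow_add _ _ _).symm
lemma mXX1 (j k : ℕ) (R : (Matrix V1 V1 ℂ)ˣ) : Xu^j * (Xu^k * R) = Xu^(j+k) * R := by
  rw [← mul_assoc, ← pow_add]
lemma mXX2 (j k : ℕ) : Xu^j * Xu^k = Xu^(j+k) := (pow_add _ _ _).symm
lemma mZZ1 (j k : ℕ) (R : (Matrix V1 V1 ℂ)ˣ) : Zu^j * (Zu^k * R) = Zu^(j+k) * R := by
  rw [← mul_assoc, ← pow_add]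
lemma mZZ2 (j k : ℕ) : Zu^j * Zu^k = Zu^(j+k) := (pow_add _ _ _).symm

lemma ZXb (b : ℕ) : Zu * Xu^b = Iu^(2*b) * (Xu^b * Zu) := by
  induction b with
  | zero => simp
  | succ n ih =>
    rw [pow_succ, ← mul_assoc, ih]
    rw [mul_assoc (Iu^(2*n)), mul_assoc (Xu^n), swapZX]
    rw [show Xu^n * (Iu^2 * (Xu*Zu)) = Iu^2 * (Xu^n * (Xu * Zu)) from cX1 2 n _]
    rw [mII1]
    rw [show Xu^n * (Xu * Zu) = Xu^n * (Xu^1 * Zu) by rw [pow_one], mXX1]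
    ring_nf
    rw [← pow_succ, Nat.add_comm 1 n]

lemma k2 (c b : ℕ) : Zu^c * Xu^b = Iu^(2*b*c) * (Xu^b * Zu^c) := by
  induction c with
  | zero => simp
  | succ n ih =>
    rw [pow_succ, mul_assoc, ZXb, cZ1, ← mul_assoc (Zu^n), ih,
      mul_assoc (Iu^(2*b*n)), mII1, mul_assoc (Xu^b), ← pow_succ]
    have h : 2*b + 2*b*n = 2*b*(n+1) := by ring
    rw [h]

lemma k1 (c b : ℕ) (R : (Matrix V1 V1 ℂ)ˣ) :
    Zu^c * (Xu^b * R) = Iu^(2*b*c) * (Xu^b * (Zu^c * R)) := by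
  rw [← mul_assoc, k2, mul_assoc, mul_assoc]
  rw [mul_assoc (Xu^b)]

lemma decomp (u : (Matrix V1 V1 ℂ)ˣ) (hu : u ∈ PauliGroup2 1) :
    ∃ a b c : ℕ, u = Iu^a * (Xu^b * Zu^c) := by
  refine Subgroup.closure_induction ?_ ?_ ?_ ?_ hu
  · rintro g (h | ⟨k, h | h⟩)
    · exact ⟨1, 0, 0, by simpa using Units.ext h⟩
    · have hk : k = 0 := Subsingleton.elim _ _
      subst hk
      exact ⟨0, 1, 0, by simpa using Units.ext h⟩
    · have hk : k = 0 := Subsingleton.elim _ _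
      subst hk
      exact ⟨0, 0, 1, by simpa using Units.ext h⟩
  · exact ⟨0, 0, 0, by simp⟩
  · rintro x y hx hy ⟨a, b, c, rfl⟩ ⟨a', b', c', rfl⟩
    refine ⟨a + (a' + 2*b'*c), b + b', c + c', ?_⟩
    simp only [mul_assoc, cX1, cZ1, k1, mII1, mXX1, mZZ1, mXX2, mZZ2, mII2]
  · rintro x hx ⟨a, b, c, rfl⟩
    refine ⟨3*a + 2*b*c, b, c, ?_⟩
    refine inv_eq_of_mul_eq_one_left ?_
    simp only [mul_assoc, cX1, cZ1, k1, mII1, mXX1, mZZ1, mXX2, mZZ2, mII2]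
    have h1 : 3 * a + 2 * (b * c) + (a + 2 * (b * c)) = 4 * (a + b * c) := by ring
    have h2 : b + b = 2 * b := by ring
    have h3 : c + c = 2 * c := by ring
    rw [h1, h2, h3, pow_mul, pow_mul, pow_mul, Iu4, Xu2, Zu2, one_pow, one_pow, one_pow]
    simp

lemma canon_eq {e1 e2 e3 f1 f2 f3 : ℕ} (h1 : e1 % 4 = f1 % 4) (h2 : e2 % 2 = f2 % 2)
    (h3 : e3 % 2 = f3 % 2) : Iu^e1 * (Xu^e2 * Zu^e3) = Iu^f1 * (Xu^f2 * Zu^f3) := by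
  rw [pow_eq_pow_mod e1 Iu4, pow_eq_pow_mod f1 Iu4, pow_eq_pow_mod e2 Xu2,
    pow_eq_pow_mod f2 Xu2, pow_eq_pow_mod e3 Zu2, pow_eq_pow_mod f3 Zu2, h1, h2, h3]

lemma Zu_inv : Zu⁻¹ = Zu := inv_eq_of_mul_eq_one_right (Units.ext ZZ)
lemma Xu_inv : Xu⁻¹ = Xu := inv_eq_of_mul_eq_one_right (Units.ext XX)

lemma conjZ (a b c : ℕ) (hb : b % 2 = 1) :
    Zu^1 * (Iu^a*(Xu^b*Zu^c)) * (Zu^1)⁻¹ = Iu^2 * (Iu^a*(Xu^b*Zu^c)) := by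
  rw [show (Zu^1)⁻¹ = Zu^1 by rw [pow_one, Zu_inv]]
  simp only [mul_assoc, cX1, cZ1, k1, mII1, mXX1, mZZ1, mXX2, mZZ2, mII2]
  refine canon_eq ?_ ?_ ?_ <;> omega

lemma conjX (a b c : ℕ) (hc : c % 2 = 1) :
    Xu^1 * (Iu^a*(Xu^b*Zu^c)) * (Xu^1)⁻¹ = Iu^2 * (Iu^a*(Xu^b*Zu^c)) := by
  rw [show (Xu^1)⁻¹ = Xu^1 by rw [pow_one, Xu_inv]]
  simp only [mul_assoc, cX1, cZ1, k1, k2, mII1, mXX1, mZZ1, mXX2, mZZ2, mII2]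
  refine canon_eq ?_ ?_ ?_ <;> omega

lemma sq_eq (a b c : ℕ) (ha : a % 2 = 1) (hb : b % 2 = 0) (hc : c % 2 = 0) :
    (Iu^a*(Xu^b*Zu^c)) * (Iu^a*(Xu^b*Zu^c)) = Iu^2 * (Xu^0 * Zu^0) := by
  simp only [mul_assoc, cX1, cZ1, k1, k2, mII1, mXX1, mZZ1, mXX2, mZZ2, mII2]
  have hbc : (b*c) % 2 = 0 := by rw [Nat.mul_mod, hb]; simp
  refine canon_eq ?_ ?_ ?_ <;> omega

lemma eq_m (a b c : ℕ) (ha : a % 4 = 2) (hb : b % 2 = 0) (hc : c % 2 = 0) :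
    (Iu^a*(Xu^b*Zu^c)) = Iu^2 * (Xu^0 * Zu^0) :=
  canon_eq (by omega) (by omega) (by omega)

lemma eq_one (a b c : ℕ) (ha : a % 4 = 0) (hb : b % 2 = 0) (hc : c % 2 = 0) :
    (Iu^a*(Xu^b*Zu^c)) = 1 := by
  have h := canon_eq (e1 := a) (e2 := b) (e3 := c) (f1 := 0) (f2 := 0) (f3 := 0)
    (by omega) (by omega) (by omega)
  simpa using h

lemma commForm (a b c a' b' c' : ℕ) :
    ((Iu^a'*(Xu^b'*Zu^c')) * (Iu^a*(Xu^b*Zu^c))) * Iu^(2*(c*b' + c'*b)) =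
    (Iu^a*(Xu^b*Zu^c)) * (Iu^a'*(Xu^b'*Zu^c')) := by
  simp only [mul_assoc, cX1, cZ1, cX2, cZ2, k1, k2, mII1, mXX1, mZZ1, mXX2, mZZ2, mII2]
  refine canon_eq ?_ ?_ ?_ <;>
    [ (have h1 := Nat.mul_comm b c'; have h2 := Nat.mul_comm c b'; omega); omega; omega]

noncomputable def xP : ↥(PauliGroup2 1) := ⟨Xu, Subgroup.subset_closure (Or.inr ⟨0, Or.inl rfl⟩)⟩
noncomputable def zP : ↥(PauliGroup2 1) := ⟨Zu, Subgroup.subset_closure (Or.inr ⟨0, Or.inr rfl⟩)⟩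
noncomputable def iP : ↥(PauliGroup2 1) := ⟨Iu, Subgroup.subset_closure (Or.inl rfl)⟩

lemma coe_xP : (xP : (Matrix V1 V1 ℂ)ˣ) = Xu := rfl
lemma coe_zP : (zP : (Matrix V1 V1 ℂ)ˣ) = Zu := rfl
lemma coe_iP : (iP : (Matrix V1 V1 ℂ)ˣ) = Iu := rfl

lemma decompP (g : ↥(PauliGroup2 1)) : ∃ a b c : ℕ, g = iP^a * (xP^b * zP^c) := by
  obtain ⟨a, b, c, h⟩ := decomp g.1 g.2
  exact ⟨a, b, c, Subtype.ext (by
    simp only [MulMemClass.coe_mul, SubmonoidClass.coe_pow, coe_xP, coe_zP, coe_iP]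
    exact h)⟩

lemma key_ne : xP * zP ≠ zP * xP := by
  intro h
  have h1 : Xu * Zu = Zu * Xu := by
    have := congrArg Subtype.val h
    simpa only [MulMemClass.coe_mul, coe_xP, coe_zP] using this
  have h2 : XM * ZM = ZM * XM := congrArg Units.val h1
  rw [ZX_eq_neg_XZ] at h2
  have h3 := congrFun (congrFun h2 (fun _ => 0)) (Pi.single 0 1)
  rw [Matrix.neg_apply, XZ_entry] at h3
  norm_num at h3

lemma m_mem (N : Subgroup ↥(PauliGroup2 1)) [hN : N.Normal] (n : ↥(PauliGroup2 1))
    (hn : n ∈ N) (hne : n ≠ 1) : iP^2 ∈ N := by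
  obtain ⟨a, b, c, rfl⟩ := decompP n
  by_cases hb : b % 2 = 1
  · have h1 : zP^1 * (iP^a*(xP^b*zP^c)) * (zP^1)⁻¹ = iP^2 * (iP^a*(xP^b*zP^c)) :=
      Subtype.ext (by
        simp only [MulMemClass.coe_mul, SubmonoidClass.coe_pow, InvMemClass.coe_inv,
          coe_xP, coe_zP, coe_iP]
        exact conjZ a b c hb)
    have h2 := hN.conj_mem _ hn (zP^1)
    rw [h1] at h2
    have h3 := mul_mem h2 (inv_mem hn)
    rwa [mul_assoc, mul_inv_cancel, mul_one] at h3
  · by_cases hc : c % 2 = 1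
    · have h1 : xP^1 * (iP^a*(xP^b*zP^c)) * (xP^1)⁻¹ = iP^2 * (iP^a*(xP^b*zP^c)) :=
        Subtype.ext (by
          simp only [MulMemClass.coe_mul, SubmonoidClass.coe_pow, InvMemClass.coe_inv,
            coe_xP, coe_zP, coe_iP]
          exact conjX a b c hc)
      have h2 := hN.conj_mem _ hn (xP^1)
      rw [h1] at h2
      have h3 := mul_mem h2 (inv_mem hn)
      rwa [mul_assoc, mul_inv_cancel, mul_one] at h3
    · have hb0 : b % 2 = 0 := by omega
      have hc0 : c % 2 = 0 := by omega
      by_cases ha : a % 2 = 1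
      · have h1 : (iP^a*(xP^b*zP^c)) * (iP^a*(xP^b*zP^c)) = iP^2 * (xP^0 * zP^0) :=
          Subtype.ext (by
            simp only [MulMemClass.coe_mul, SubmonoidClass.coe_pow, coe_xP, coe_zP, coe_iP]
            exact sq_eq a b c ha hb0 hc0)
        have h2 := mul_mem hn hn
        rw [h1] at h2
        simpa using h2
      · rcases (by omega : a % 4 = 0 ∨ a % 4 = 2) with h4 | h4
        · exact absurd (Subtype.ext (by
            simp only [MulMemClass.coe_mul, SubmonoidClass.coe_pow, coe_xP, coe_zP, coe_iP,
              OneMemClass.coe_one]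
            exact eq_one a b c h4 hb0 hc0)) hne
        · have h1 : (iP^a*(xP^b*zP^c)) = iP^2 * (xP^0 * zP^0) :=
            Subtype.ext (by
              simp only [MulMemClass.coe_mul, SubmonoidClass.coe_pow, coe_xP, coe_zP, coe_iP]
              exact eq_m a b c h4 hb0 hc0)
          rw [h1] at hn
          simpa using hn

lemma realmul {A B : Matrix V1 V1 ℂ} (hA : ∀ p q, (A p q).im = 0)
    (hB : ∀ p q, (B p q).im = 0) : ∀ p q, ((A * B) p q).im = 0 := by
  intro p q
  rw [Matrix.mul_apply, Complex.im_sum]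
  refine Finset.sum_eq_zero fun r _ => ?_
  rw [Complex.mul_im, hA, hB]
  ring

noncomputable def Rsub : Subgroup (Matrix V1 V1 ℂ)ˣ where
  carrier := {u | (∀ p q, (u.val p q).im = 0) ∧ ∀ p q, ((u⁻¹).val p q).im = 0}
  one_mem' := by
    constructor <;> intro p q <;>
      simp [Matrix.one_apply, apply_ite Complex.im]
  mul_mem' := by
    rintro u v ⟨hu1, hu2⟩ ⟨hv1, hv2⟩
    refine ⟨?_, ?_⟩
    · simpa using realmul hu1 hv1
    · rw [_root_.mul_inv_rev]
      simpa using realmul hv2 hu2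
  inv_mem' := by
    rintro u ⟨hu1, hu2⟩
    refine ⟨hu2, ?_⟩
    simpa using hu1

lemma X_real : ∀ p q, ((XM) p q).im = 0 := by
  intro p q; simp [shiftX2, apply_ite Complex.im]

lemma Z_real : ∀ p q, ((ZM) p q).im = 0 := by
  intro p q
  have h : ∀ k : ℕ, ((-1:ℂ)^k).im = 0 := by
    intro k
    have : ((-1:ℂ))^k = (((-1:ℝ)^k : ℝ) : ℂ) := by norm_cast
    rw [this, Complex.ofReal_im]
  simp [clockZ2, Matrix.diagonal_apply, apply_ite Complex.im, h]

lemma Xu_mem_R : Xu ∈ Rsub := ⟨X_real, by rw [Xu_inv]; exact X_real⟩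
lemma Zu_mem_R : Zu ∈ Rsub := ⟨Z_real, by rw [Zu_inv]; exact Z_real⟩

lemma Iu_not_mem_R : Iu ∉ Rsub := by
  intro h
  have h1 := h.1 (fun _ => 0) (fun _ => 0)
  have h2 : Iu.val (fun _ => 0) (fun _ => 0) = Complex.I := by
    show (Complex.I • (1 : Matrix V1 V1 ℂ)) _ _ = Complex.I
    rw [Matrix.smul_apply, Matrix.one_apply_eq, smul_eq_mul, mul_one]
  rw [h2, Complex.I_im] at h1
  norm_num at h1


/-- `P_{1,2}` is just nonabelian but not minimal nonabelian: it is
nonabelian, every quotient by a nontrivial normal subgroup is abelian, and it has a proper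
nonabelian subgroup. -/
theorem pauli_one_two_just_nonabelian_not_minimal :
    (∃ a b : ↥(PauliGroup2 1), a * b ≠ b * a) ∧
    (∀ (N : Subgroup ↥(PauliGroup2 1)) [N.Normal], N ≠ ⊥ →
      ∀ x y : ↥(PauliGroup2 1) ⧸ N, x * y = y * x) ∧
    (∃ H : Subgroup ↥(PauliGroup2 1), H ≠ ⊤ ∧ ∃ a b : ↥H, a * b ≠ b * a) := by
  refine ⟨⟨xP, zP, key_ne⟩, ?_, ?_⟩
  · intro N hNorm hbot x y
    obtain ⟨n0, hn0⟩ := Subgroup.ne_bot_iff_exists_ne_one.1 hbot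
    have hmem : iP^2 ∈ N := by
      refine m_mem N n0.1 n0.2 ?_
      intro h
      exact hn0 (Subtype.ext h)
    refine QuotientGroup.induction_on x fun g => QuotientGroup.induction_on y fun h => ?_
    obtain ⟨a, b, c, rfl⟩ := decompP g
    obtain ⟨a', b', c', rfl⟩ := decompP h
    rw [← QuotientGroup.mk_mul, ← QuotientGroup.mk_mul, QuotientGroup.eq]
    have hcomm : ((iP^a*(xP^b*zP^c)) * (iP^a'*(xP^b'*zP^c'))) * iP^(2*(c'*b + c*b')) =
        (iP^a'*(xP^b'*zP^c')) * (iP^a*(xP^b*zP^c)) :=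
      Subtype.ext (by
        simp only [MulMemClass.coe_mul, SubmonoidClass.coe_pow, coe_xP, coe_zP, coe_iP]
        exact commForm a' b' c' a b c)
    rw [← hcomm, pow_mul, inv_mul_cancel_left]
    exact pow_mem hmem _
  · refine ⟨Subgroup.closure {xP, zP}, ?_, ?_⟩
    · intro htop
      have hiP : iP ∈ Subgroup.closure {xP, zP} := htop ▸ Subgroup.mem_top iP
      have hIu : Iu ∈ (Subgroup.closure {xP, zP}).map (PauliGroup2 1).subtype :=
        ⟨iP, hiP, rfl⟩
      rw [MonoidHom.map_closure] at hIu
      have himg : (PauliGroup2 1).subtype '' {xP, zP} = {Xu, Zu} := by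
        rw [Set.image_pair]; rfl
      rw [himg] at hIu
      have hle : Subgroup.closure {Xu, Zu} ≤ Rsub := by
        rw [Subgroup.closure_le]
        rintro u (rfl | rfl)
        · exact Xu_mem_R
        · exact Zu_mem_R
      exact Iu_not_mem_R (hle hIu)
    · refine ⟨⟨xP, Subgroup.subset_closure (Set.mem_insert _ _)⟩,
        ⟨zP, Subgroup.subset_closure (Set.mem_insert_of_mem _ rfl)⟩, ?_⟩
      intro h
      refine key_ne ?_
      have := congrArg Subtype.val h
      simpa only [MulMemClass.coe_mul] using this
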